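/- Let A = ℤ[t₁,…,tₙ, γ₁,…,γₙ]/I where I is generated by cᵢ − 2γᵢ (1 ≤ i ≤ n) with cᵢ = eᵢ(t₁,…,tₙ), together with γ_{2k} + Σ_{i=1}^{2k−1} (−1)ⁱ γᵢ γ_{2k−i} for 1 ≤ k ≤ n (with γ_j = 0 for j > n). Then the quotient of A by the ideal generated by t₁,…,tₙ is isomorphic to ℤ[γ₁,…,γₙ]/J where J is generated by 2γᵢ (1 ≤ i ≤ n) and γ_{2k} + Σ_{i=1}^{2k−1}(−1)ⁱ γᵢγ_{2k−i} (1 ≤ k ≤ n). -/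
import Mathlib


open MvPolynomial Finset

/-- In `ℤ[t₁,…,tₙ,γ₁,…,γₙ]` (the `t`'s are `X (Sum.inl i)`, the `γ`'s are
`X (Sum.inr j)`): `γ_j` with the convention `γ_j = 0` for `j = 0` or `j > n`
(1-based indexing). -/
noncomputable def gam9 (n : ℕ) (j : ℕ) : MvPolynomial (Fin n ⊕ Fin n) ℤ :=
  if h : 1 ≤ j ∧ j ≤ n then X (Sum.inr ⟨j - 1, by omega⟩) else 0

/-- `c_k = e_k(t₁,…,tₙ)`. -/
noncomputable def c9 (n : ℕ) (k : ℕ) : MvPolynomial (Fin n ⊕ Fin n) ℤ :=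
  ∑ A ∈ (univ : Finset (Fin n)).powersetCard k, ∏ i ∈ A, X (Sum.inl i)

/-- The ideal `I` generated by `cᵢ - 2γᵢ` (`1 ≤ i ≤ n`) and
`γ_{2k} + Σ_{i=1}^{2k-1} (-1)ⁱ γᵢ γ_{2k-i}` (`1 ≤ k ≤ n`). -/
noncomputable def I9 (n : ℕ) : Ideal (MvPolynomial (Fin n ⊕ Fin n) ℤ) :=
  Ideal.span
    ((Set.range fun i : Fin n => c9 n (i + 1) - 2 * gam9 n (i + 1)) ∪
     (Set.range fun k : Fin n => gam9 n (2 * ((k : ℕ) + 1)) +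
        ∑ i ∈ Icc 1 (2 * ((k : ℕ) + 1) - 1),
          C ((-1 : ℤ) ^ i) * (gam9 n i * gam9 n (2 * ((k : ℕ) + 1) - i))))

/-- `γ_j` in the target ring `ℤ[γ₁,…,γₙ]`, with `γ_j = 0` for `j > n`. -/
noncomputable def gam9' (n : ℕ) (j : ℕ) : MvPolynomial (Fin n) ℤ :=
  if h : 1 ≤ j ∧ j ≤ n then X ⟨j - 1, by omega⟩ else 0

/-- The ideal `J` of `ℤ[γ₁,…,γₙ]` generated by `2γᵢ` (`1 ≤ i ≤ n`) and
`γ_{2k} + Σ_{i=1}^{2k-1} (-1)ⁱ γᵢ γ_{2k-i}` (`1 ≤ k ≤ n`). -/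
noncomputable def J9 (n : ℕ) : Ideal (MvPolynomial (Fin n) ℤ) :=
  Ideal.span
    ((Set.range fun i : Fin n => 2 * gam9' n (i + 1)) ∪
     (Set.range fun k : Fin n => gam9' n (2 * ((k : ℕ) + 1)) +
        ∑ i ∈ Icc 1 (2 * ((k : ℕ) + 1) - 1),
          C ((-1 : ℤ) ^ i) * (gam9' n i * gam9' n (2 * ((k : ℕ) + 1) - i))))

noncomputable def f9 (n : ℕ) : MvPolynomial (Fin n ⊕ Fin n) ℤ →+* MvPolynomial (Fin n) ℤ :=
  (aeval (Sum.elim (fun _ => 0) X)).toRingHom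
noncomputable def s9 (n : ℕ) : MvPolynomial (Fin n) ℤ →+* MvPolynomial (Fin n ⊕ Fin n) ℤ :=
  (rename Sum.inr).toRingHom
noncomputable def T9 (n : ℕ) : Ideal (MvPolynomial (Fin n ⊕ Fin n) ℤ) :=
  Ideal.span (Set.range fun i : Fin n => X (Sum.inl i))

lemma f9_gam (n j : ℕ) : f9 n (gam9 n j) = gam9' n j := by
  unfold f9 gam9 gam9'; split_ifs <;> simp
lemma s9_gam (n j : ℕ) : s9 n (gam9' n j) = gam9 n j := by
  unfold s9 gam9 gam9'; split_ifs <;> simp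
lemma f9_C (n : ℕ) (a : ℤ) : f9 n (C a) = C a := by simp [f9]
lemma s9_C (n : ℕ) (a : ℤ) : s9 n (C a) = C a := by simp [s9]

lemma c9_mem (n k : ℕ) (hk : 1 ≤ k) : c9 n k ∈ T9 n := by
  unfold c9
  refine Ideal.sum_mem _ fun A hA => ?_
  rw [mem_powersetCard] at hA
  obtain ⟨a, ha⟩ : A.Nonempty := by rw [← Finset.card_pos, hA.2]; omega
  rw [← Finset.mul_prod_erase A _ ha]
  exact Ideal.mul_mem_right _ _ (Ideal.subset_span ⟨a, rfl⟩)

lemma f9_c9 (n k : ℕ) (hk : 1 ≤ k) : f9 n (c9 n k) = 0 := by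
  unfold c9
  rw [map_sum]
  refine Finset.sum_eq_zero fun A hA => ?_
  rw [mem_powersetCard] at hA
  obtain ⟨a, ha⟩ : A.Nonempty := by rw [← Finset.card_pos, hA.2]; omega
  rw [map_prod]
  exact Finset.prod_eq_zero ha (by simp [f9])

lemma K9_eq (n : ℕ) : I9 n ⊔ T9 n = Ideal.span
    (((Set.range fun i : Fin n => c9 n (i + 1) - 2 * gam9 n (i + 1)) ∪
     (Set.range fun k : Fin n => gam9 n (2 * ((k : ℕ) + 1)) +
        ∑ i ∈ Icc 1 (2 * ((k : ℕ) + 1) - 1),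
          C ((-1 : ℤ) ^ i) * (gam9 n i * gam9 n (2 * ((k : ℕ) + 1) - i)))) ∪
     (Set.range fun i : Fin n => X (Sum.inl i))) := by
  rw [Ideal.span_union]; rfl

noncomputable def phi9 (n : ℕ) :
    (MvPolynomial (Fin n ⊕ Fin n) ℤ ⧸ (I9 n ⊔ T9 n)) →+* (MvPolynomial (Fin n) ℤ ⧸ J9 n) :=
  Ideal.Quotient.lift _ ((Ideal.Quotient.mk (J9 n)).comp (f9 n)) (by
    intro a ha
    rw [RingHom.comp_apply, Ideal.Quotient.eq_zero_iff_mem, ← Ideal.mem_comap]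
    rw [K9_eq] at ha
    refine Ideal.span_le.mpr ?_ ha
    rintro x ((⟨i, rfl⟩ | ⟨k, rfl⟩) | ⟨i, rfl⟩) <;> rw [SetLike.mem_coe, Ideal.mem_comap]
    · have : f9 n (c9 n (i + 1) - 2 * gam9 n (i + 1)) = -(2 * gam9' n (i + 1)) := by
        rw [map_sub, f9_c9 n _ (by omega), map_mul, map_ofNat, f9_gam]
        ring
      rw [this]
      exact neg_mem (Ideal.subset_span (Set.mem_union_left _ ⟨i, rfl⟩))
    · have : f9 n (gam9 n (2 * ((k : ℕ) + 1)) +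
          ∑ i ∈ Icc 1 (2 * ((k : ℕ) + 1) - 1),
            C ((-1 : ℤ) ^ i) * (gam9 n i * gam9 n (2 * ((k : ℕ) + 1) - i))) =
          gam9' n (2 * ((k : ℕ) + 1)) +
          ∑ i ∈ Icc 1 (2 * ((k : ℕ) + 1) - 1),
            C ((-1 : ℤ) ^ i) * (gam9' n i * gam9' n (2 * ((k : ℕ) + 1) - i)) := by
        rw [map_add, map_sum, f9_gam]
        congr 1
        refine Finset.sum_congr rfl fun i _ => ?_
        rw [map_mul, map_mul, f9_C, f9_gam, f9_gam]
      rw [this]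
      exact Ideal.subset_span (Set.mem_union_right _ ⟨k, rfl⟩)
    · have : f9 n (X (Sum.inl i) : MvPolynomial (Fin n ⊕ Fin n) ℤ) = 0 := by simp [f9]
      rw [this]
      exact zero_mem _)

noncomputable def psi9 (n : ℕ) :
    (MvPolynomial (Fin n) ℤ ⧸ J9 n) →+* (MvPolynomial (Fin n ⊕ Fin n) ℤ ⧸ (I9 n ⊔ T9 n)) :=
  Ideal.Quotient.lift _ ((Ideal.Quotient.mk (I9 n ⊔ T9 n)).comp (s9 n)) (by
    intro a ha
    rw [RingHom.comp_apply, Ideal.Quotient.eq_zero_iff_mem, ← Ideal.mem_comap]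
    refine Ideal.span_le.mpr ?_ ha
    rintro x (⟨i, rfl⟩ | ⟨k, rfl⟩) <;> rw [SetLike.mem_coe, Ideal.mem_comap]
    · have : s9 n (2 * gam9' n (i + 1)) =
          c9 n (i + 1) - (c9 n (i + 1) - 2 * gam9 n (i + 1)) := by
        rw [map_mul, map_ofNat, s9_gam]; ring
      rw [this]
      exact sub_mem (Ideal.mem_sup_right (c9_mem n _ (by omega)))
        (Ideal.mem_sup_left (Ideal.subset_span (Set.mem_union_left _ ⟨i, rfl⟩)))
    · have : s9 n (gam9' n (2 * ((k : ℕ) + 1)) +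
          ∑ i ∈ Icc 1 (2 * ((k : ℕ) + 1) - 1),
            C ((-1 : ℤ) ^ i) * (gam9' n i * gam9' n (2 * ((k : ℕ) + 1) - i))) =
          gam9 n (2 * ((k : ℕ) + 1)) +
          ∑ i ∈ Icc 1 (2 * ((k : ℕ) + 1) - 1),
            C ((-1 : ℤ) ^ i) * (gam9 n i * gam9 n (2 * ((k : ℕ) + 1) - i)) := by
        rw [map_add, map_sum, s9_gam]
        congr 1
        refine Finset.sum_congr rfl fun i _ => ?_
        rw [map_mul, map_mul, s9_C, s9_gam, s9_gam]
      rw [this]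
      exact Ideal.mem_sup_left (Ideal.subset_span (Set.mem_union_right _ ⟨k, rfl⟩)))

noncomputable def equiv9 (n : ℕ) :
    (MvPolynomial (Fin n ⊕ Fin n) ℤ ⧸ (I9 n ⊔ T9 n)) ≃+* (MvPolynomial (Fin n) ℤ ⧸ J9 n) :=
  RingEquiv.ofRingHom (phi9 n) (psi9 n)
    (by
      refine Ideal.Quotient.ringHom_ext (MvPolynomial.ringHom_ext (fun a => ?_) (fun j => ?_))
      · simp [phi9, psi9, s9_C, f9_C]
      · simp [phi9, psi9, s9, f9])
    (by
      refine Ideal.Quotient.ringHom_ext (MvPolynomial.ringHom_ext (fun a => ?_) (fun v => ?_))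
      · simp [phi9, psi9, s9_C, f9_C]
      · cases v with
        | inl i =>
          have h0 : f9 n (X (Sum.inl i) : MvPolynomial (Fin n ⊕ Fin n) ℤ) = 0 := by simp [f9]
          simp only [RingHom.comp_apply, RingHom.id_apply, phi9, psi9,
            Ideal.Quotient.lift_mk, h0, map_zero]
          exact ((Ideal.Quotient.eq_zero_iff_mem).mpr
            (Ideal.mem_sup_right (Ideal.subset_span (Set.mem_range_self i)))).symm
        | inr j => simp [phi9, psi9, s9, f9])

/-- The quotient of
`A = ℤ[t₁,…,tₙ,γ₁,…,γₙ]/I` (the Toda–Watanabe presentation of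
`H*(SO(2n+1)/Tⁿ;ℤ)`) by the ideal generated by the classes of `t₁,…,tₙ` is
isomorphic to `ℤ[γ₁,…,γₙ]/J`. -/
theorem stmt9 (n : ℕ) :
    Nonempty
      (((MvPolynomial (Fin n ⊕ Fin n) ℤ ⧸ I9 n) ⧸
          Ideal.span (Set.range fun i : Fin n =>
            Ideal.Quotient.mk (I9 n) (X (Sum.inl i)))) ≃+*
        (MvPolynomial (Fin n) ℤ ⧸ J9 n)) := by
  have e1 : Ideal.span (Set.range fun i : Fin n =>
      Ideal.Quotient.mk (I9 n) (X (Sum.inl i))) = (T9 n).map (Ideal.Quotient.mk (I9 n)) := by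
    rw [T9, Ideal.map_span, ← Set.range_comp]; rfl
  exact ⟨((Ideal.quotEquivOfEq e1).trans
    (DoubleQuot.quotQuotEquivQuotSup (I9 n) (T9 n))).trans (equiv9 n)⟩
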